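/- For real θ_X, θ_Y, let D be the 4×4 complex matrix D = (1/2)·!![α₁, 0, 0, α₂; 0, α₃, α₄, 0; 0, α₄, α₃, 0; α₂, 0, 0, α₁], where α₁ = cos θ_X cos θ_Y + sin θ_X sin θ_Y, α₂ = cos θ_X cos θ_Y − sin θ_X sin θ_Y, α₃ = i(cos θ_X sin θ_Y + sin θ_X cos θ_Y), α₄ = i(sin θ_X cos θ_Y − cos θ_X sin θ_Y). Then the multiset of singular values of D equals { |cos θ_X cos θ_Y|, |cos θ_X sin θ_Y|, |sin θ_X cos θ_Y|, |sin θ_X sin θ_Y| }. -/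

import Mathlib

open Matrix Complex Kronecker
open scoped ComplexOrder
open Polynomial

noncomputable section

/-- A density matrix: positive semidefinite with trace 1. -/
def IsDensityMatrix {d : Type*} [Fintype d] (ρ : Matrix d d ℂ) : Prop :=
  ρ.PosSemidef ∧ ρ.trace = 1

/-- A separable state on a bipartite system: a finite convex combination of Kronecker
products of density matrices. -/
def SeparableState {dA dB : Type*} [Fintype dA] [Fintype dB]
    (ρ : Matrix (dA × dB) (dA × dB) ℂ) : Prop :=
  ∃ (n : ℕ) (p : Fin n → ℝ) (σ : Fin n → Matrix dA dA ℂ) (τ : Fin n → Matrix dB dB ℂ),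
    (∀ k, 0 ≤ p k) ∧ (∑ k, p k) = 1 ∧
    (∀ k, IsDensityMatrix (σ k)) ∧ (∀ k, IsDensityMatrix (τ k)) ∧
    ρ = ∑ k, (p k : ℂ) • ((σ k) ⊗ₖ (τ k))

/-- The robustness of entanglement. -/
def robustness {dA dB : Type*} [Fintype dA] [Fintype dB]
    (ρ : Matrix (dA × dB) (dA × dB) ℂ) : ℝ :=
  sInf { t : ℝ | 0 ≤ t ∧ ∃ σ : Matrix (dA × dB) (dA × dB) ℂ,
    SeparableState σ ∧ SeparableState (((1 + t : ℝ) : ℂ)⁻¹ • (ρ + (t : ℂ) • σ)) }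

/-- γ(ρ): optimal one-norm of a quasiprobability decomposition into separable states. -/
def gammaSep {dA dB : Type*} [Fintype dA] [Fintype dB]
    (ρ : Matrix (dA × dB) (dA × dB) ℂ) : ℝ :=
  sInf { c : ℝ | ∃ (ap am : ℝ) (ρp ρm : Matrix (dA × dB) (dA × dB) ℂ),
    0 ≤ ap ∧ 0 ≤ am ∧ SeparableState ρp ∧ SeparableState ρm ∧
    ρ = (ap : ℂ) • ρp - (am : ℂ) • ρm ∧ c = ap + am }

/-- Singular values of a complex matrix: square roots of eigenvalues of `Mᴴ * M`. -/
def singularValues {m n : Type*} [Fintype m] [Fintype n] [DecidableEq n]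
    (M : Matrix m n ℂ) : n → ℝ :=
  fun i => Real.sqrt ((Matrix.isHermitian_conjTranspose_mul_self M).eigenvalues i)

section Aux
variable {n R : Type*} [Fintype n] [DecidableEq n] [CommRing R]

lemma charpoly_conj_aux (U A V : Matrix n n R) (h1 : U * V = 1) (h2 : V * U = 1) :
    (U * A * V).charpoly = A.charpoly := by
  have hc : charmatrix (U * A * V) = (U.map C) * charmatrix A * (V.map C) := by
    unfold Matrix.charmatrix
    rw [Matrix.mul_sub, Matrix.sub_mul]
    congr 1
    · have hcom : Commute (Matrix.scalar n (X : R[X])) (U.map C) :=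
        Matrix.scalar_commute _ (fun r => Commute.all _ _) _
      rw [← hcom.eq, mul_assoc, ← Matrix.map_mul, h1]
      simp
    · simp only [RingHom.mapMatrix_apply, ← Matrix.map_mul]
  unfold Matrix.charpoly
  rw [hc, det_mul, det_mul, mul_comm, ← mul_assoc, ← det_mul, ← Matrix.map_mul, h2]
  simp

lemma charpoly_diagonal' (d : n → R) :
    (Matrix.diagonal d).charpoly = ∏ i, (X - C (d i)) := by
  have : charmatrix (Matrix.diagonal d) = Matrix.diagonal fun i => X - C (d i) := by
    ext i j
    rcases eq_or_ne i j with rfl | h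
    · simp [charmatrix_apply_eq]
    · simp [charmatrix_apply_ne _ _ _ h, Matrix.diagonal_apply_ne _ h]
  rw [Matrix.charpoly, this, det_diagonal]

lemma isHermitian_charpoly {A : Matrix n n ℂ} (hA : A.IsHermitian) :
    A.charpoly = ∏ i, (X - C ((hA.eigenvalues i : ℝ) : ℂ)) := by
  have hs : (star (hA.eigenvectorUnitary : Matrix n n ℂ)) * A * (hA.eigenvectorUnitary : Matrix n n ℂ) =
      Matrix.diagonal (RCLike.ofReal ∘ hA.eigenvalues) := by
    have := hA.conjStarAlgAut_star_eigenvectorUnitary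
    rwa [Unitary.conjStarAlgAut_star_apply] at this
  have h1 : (star (hA.eigenvectorUnitary : Matrix n n ℂ)) * (hA.eigenvectorUnitary : Matrix n n ℂ) = 1 :=
    Unitary.coe_star_mul_self _
  have h2 : (hA.eigenvectorUnitary : Matrix n n ℂ) * (star (hA.eigenvectorUnitary : Matrix n n ℂ)) = 1 :=
    Unitary.coe_mul_star_self _
  calc A.charpoly
      = ((star (hA.eigenvectorUnitary : Matrix n n ℂ)) * A * (hA.eigenvectorUnitary : Matrix n n ℂ)).charpoly :=
        (charpoly_conj_aux _ _ _ h1 h2).symm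
    _ = (Matrix.diagonal (RCLike.ofReal ∘ hA.eigenvalues)).charpoly := by rw [hs]
    _ = _ := by rw [charpoly_diagonal']; rfl

end Aux

set_option maxHeartbeats 2000000 in
theorem singular_values_of_D (θX θY : ℝ) :
    let α₁ : ℂ := Real.cos θX * Real.cos θY + Real.sin θX * Real.sin θY
    let α₂ : ℂ := Real.cos θX * Real.cos θY - Real.sin θX * Real.sin θY
    let α₃ : ℂ := Complex.I * (Real.cos θX * Real.sin θY + Real.sin θX * Real.cos θY)
    let α₄ : ℂ := Complex.I * (Real.sin θX * Real.cos θY - Real.cos θX * Real.sin θY)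
    let D : Matrix (Fin 4) (Fin 4) ℂ :=
      (1 / 2 : ℂ) • !![α₁, 0, 0, α₂; 0, α₃, α₄, 0; 0, α₄, α₃, 0; α₂, 0, 0, α₁]
    Finset.univ.val.map (singularValues D) =
      ({|Real.cos θX * Real.cos θY|, |Real.cos θX * Real.sin θY|,
        |Real.sin θX * Real.cos θY|, |Real.sin θX * Real.sin θY|} : Multiset ℝ) := by
  intro α₁ α₂ α₃ α₄ D
  have h := Matrix.isHermitian_conjTranspose_mul_self D
  set a : ℝ := Real.cos θX * Real.cos θY with ha
  set b : ℝ := Real.sin θX * Real.sin θY with hb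
  set c : ℝ := Real.cos θX * Real.sin θY with hc
  set d : ℝ := Real.sin θX * Real.cos θY with hd
  have hM : Dᴴ * D =
      !![((a:ℂ)^2+(b:ℂ)^2)/2, 0, 0, ((a:ℂ)^2-(b:ℂ)^2)/2;
         0, ((c:ℂ)^2+(d:ℂ)^2)/2, ((d:ℂ)^2-(c:ℂ)^2)/2, 0;
         0, ((d:ℂ)^2-(c:ℂ)^2)/2, ((c:ℂ)^2+(d:ℂ)^2)/2, 0;
         ((a:ℂ)^2-(b:ℂ)^2)/2, 0, 0, ((a:ℂ)^2+(b:ℂ)^2)/2] := by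
    ext i j
    fin_cases i <;> fin_cases j <;>
      simp [D, α₁, α₂, α₃, α₄, Matrix.mul_apply, Matrix.conjTranspose_apply,
        Fin.sum_univ_four, map_add, map_sub, _root_.map_mul, map_div₀, map_ofNat,
        _root_.map_one, Complex.conj_ofReal, ha, hb, hc, hd] <;>
      push_cast <;> ring_nf <;> simp [Complex.I_sq, ← Complex.cos_conj, ← Complex.sin_conj, Complex.conj_ofReal] <;> ring_nf
  -- conjugating matrix
  set L : Matrix (Fin 4) (Fin 4) ℂ :=
    !![1,0,0,1; 0,1,1,0; 0,1,-1,0; 1,0,0,-1] with hLdef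
  set U : Matrix (Fin 4) (Fin 4) ℂ := (2⁻¹ : ℂ) • L with hUdef
  have hL1 : U * L = 1 := by
    ext i j
    fin_cases i <;> fin_cases j <;>
      simp [hUdef, hLdef, Matrix.mul_apply, Fin.sum_univ_four, Matrix.one_apply] <;> norm_num
  have hL2 : L * U = 1 := by
    ext i j
    fin_cases i <;> fin_cases j <;>
      simp [hUdef, hLdef, Matrix.mul_apply, Fin.sum_univ_four, Matrix.one_apply] <;> norm_num
  set v : Fin 4 → ℂ := ![(a:ℂ)^2, (d:ℂ)^2, (c:ℂ)^2, (b:ℂ)^2] with hv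
  have hdiag : U * (Dᴴ * D) * L = Matrix.diagonal v := by
    rw [hM]
    ext i j
    fin_cases i <;> fin_cases j <;>
      simp [hUdef, hLdef, hv, Matrix.mul_apply, Fin.sum_univ_four, Matrix.diagonal] <;> ring
  have hcp : (Dᴴ * D).charpoly = ∏ i, (X - C (v i)) := by
    rw [← charpoly_conj_aux U (Dᴴ * D) L hL1 hL2, hdiag, charpoly_diagonal']
  have hcp2 := isHermitian_charpoly h
  -- eigenvalue multiset over ℂ
  have hroots : (Finset.univ.val.map fun i => ((h.eigenvalues i : ℝ) : ℂ)) =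
      ({(a:ℂ)^2, (d:ℂ)^2, (c:ℂ)^2, (b:ℂ)^2} : Multiset ℂ) := by
    have e1 : (Dᴴ * D).charpoly =
        ((Finset.univ.val.map fun i => ((h.eigenvalues i : ℝ) : ℂ)).map fun z => X - C z).prod := by
      rw [hcp2, Multiset.map_map, Finset.prod_eq_multiset_prod]
      rfl
    have e2 : (Dᴴ * D).charpoly =
        (({(a:ℂ)^2, (d:ℂ)^2, (c:ℂ)^2, (b:ℂ)^2} : Multiset ℂ).map fun z => X - C z).prod := by
      rw [hcp, Fin.prod_univ_four]
      simp [hv, Multiset.prod_cons, mul_assoc]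
    have := congrArg Polynomial.roots (e1.symm.trans e2)
    rwa [Polynomial.roots_multiset_prod_X_sub_C, Polynomial.roots_multiset_prod_X_sub_C] at this
  -- eigenvalue multiset over ℝ
  have hre : Finset.univ.val.map h.eigenvalues = ({a^2, d^2, c^2, b^2} : Multiset ℝ) := by
    apply Multiset.map_injective Complex.ofReal_injective
    rw [Multiset.map_map]
    convert hroots using 1
    simp
    simp only [Multiset.insert_eq_cons, Multiset.map_cons, Multiset.map_singleton, Complex.ofReal_pow]
  -- finish
  show Finset.univ.val.map (fun i => Real.sqrt (h.eigenvalues i)) = _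
  have : (fun i => Real.sqrt (h.eigenvalues i)) = Real.sqrt ∘ h.eigenvalues := rfl
  rw [this, ← Multiset.map_map, hre]
  simp only [Multiset.insert_eq_cons, Multiset.map_cons, Multiset.map_singleton,
    Real.sqrt_sq_eq_abs]
  rw [Multiset.cons_swap |d| |c|]
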